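/- For n ≥ 1 let Gₙ = {t ∈ ℝⁿ : 0 < tₙ < tₙ₋₁ < ⋯ < t₁ < 1} and let uₙ(t) = t₁ − t₂ + ⋯ + (−1)^{n+1} tₙ be the alternating sum. Then for every ν > 0 and even n ≥ 4, the integral fₙ⁻ = ∫_{Gₙ} e^{−4ν uₙ(t)} dt satisfies fₙ⁻ ≤ (4ν)^{−n/2}, and for odd n ≥ 3, fₙ⁻ ≤ (4ν)^{−(n+1)/2}. -/

import Mathlib

open MeasureTheory

open Set ENNReal

namespace Stmt19Aux

noncomputable def pexp (c : ℝ) (n : ℕ) (t : Fin n → ℝ) : ℝ≥0∞ :=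
  ENNReal.ofReal (Real.exp (-c * ∑ i : Fin n, (-1 : ℝ) ^ (i : ℕ) * t i))

def pSet (n : ℕ) : Set (Fin n → ℝ) :=
  {t | (∀ i, 0 < t i ∧ t i < 1) ∧
    ∀ i j : Fin n, (i : ℕ) % 2 = 0 → (j : ℕ) = (i : ℕ) + 1 → t j < t i}

noncomputable def F (c : ℝ) (n : ℕ) : (Fin n → ℝ) → ℝ≥0∞ :=
  (pSet n).indicator (pexp c n)

lemma measurable_sum_aux (n : ℕ) :
    Measurable (fun t : Fin n → ℝ => ∑ i : Fin n, (-1 : ℝ) ^ (i : ℕ) * t i) :=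
  Finset.measurable_sum _ fun i _ => (measurable_pi_apply i).const_mul _

lemma measurable_pexp (c : ℝ) (n : ℕ) : Measurable (pexp c n) :=
  (Real.measurable_exp.comp ((measurable_sum_aux n).const_mul _)).ennreal_ofReal

lemma measurableSet_pSet (n : ℕ) : MeasurableSet (pSet n) := by
  have h : pSet n =
      (⋂ i : Fin n, ({t : Fin n → ℝ | 0 < t i} ∩ {t | t i < 1})) ∩
      ⋂ i : Fin n, ⋂ j : Fin n, ⋂ (_ : (i : ℕ) % 2 = 0) (_ : (j : ℕ) = (i : ℕ) + 1),
        {t : Fin n → ℝ | t j < t i} := by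
    ext t
    simp only [pSet, mem_setOf_eq, mem_inter_iff, mem_iInter, mem_setOf_eq]

  rw [h]
  exact (MeasurableSet.iInter fun i =>
      ((measurableSet_lt measurable_const (measurable_pi_apply i)).inter
        (measurableSet_lt (measurable_pi_apply i) measurable_const))).inter
    (MeasurableSet.iInter fun i => MeasurableSet.iInter fun j =>
      MeasurableSet.iInter fun _ => MeasurableSet.iInter fun _ =>
        measurableSet_lt (measurable_pi_apply j) (measurable_pi_apply i))

lemma measurable_F (c : ℝ) (n : ℕ) : Measurable (F c n) :=
  (measurable_pexp c n).indicator (measurableSet_pSet n)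

lemma F_ne_top (c : ℝ) (n : ℕ) (t : Fin n → ℝ) : F c n t ≠ ⊤ := by
  unfold F
  by_cases ht : t ∈ pSet n
  · simp [indicator_of_mem ht, pexp]
  · simp [indicator_of_notMem ht]


lemma pSet_snoc {m : ℕ} (hm : m % 2 = 0) (t : Fin m → ℝ) (x : ℝ) :
    Fin.snoc t x ∈ pSet (m+1) ↔ t ∈ pSet m ∧ 0 < x ∧ x < 1 := by
  constructor
  · rintro ⟨h1, h2⟩
    refine ⟨⟨fun i => ?_, fun i j hi hj => ?_⟩, ?_, ?_⟩
    · have := h1 (Fin.castSucc i); simpa using this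
    · have := h2 (Fin.castSucc i) (Fin.castSucc j) (by simpa using hi) (by simpa using hj)
      simpa using this
    · have := (h1 (Fin.last m)).1; simpa using this
    · have := (h1 (Fin.last m)).2; simpa using this
  · rintro ⟨⟨h1, h2⟩, hx0, hx1⟩
    refine ⟨fun i => ?_, fun i j hi hj => ?_⟩
    · induction i using Fin.lastCases with
      | last => simpa using ⟨hx0, hx1⟩
      | cast i => simpa using h1 i
    · induction j using Fin.lastCases with
      | last =>
        exfalso
        have hlt : (i : ℕ) < m + 1 := i.isLt
        simp only [Fin.val_last] at hj
        omega
      | cast j =>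
        induction i using Fin.lastCases with
        | last =>
          exfalso
          have hlt : (j : ℕ) < m := j.isLt
          simp only [Fin.coe_castSucc, Fin.val_last] at hj
          omega
        | cast i =>
          have := h2 i j (by simpa using hi) (by simpa using hj)
          simpa using this

lemma pSet_snoc_pair {m : ℕ} (hm : m % 2 = 0) (t : Fin (m+1) → ℝ) (x : ℝ) :
    Fin.snoc t x ∈ pSet (m+2) ↔ t ∈ pSet (m+1) ∧ 0 < x ∧ x < t (Fin.last m) := by
  constructor
  · rintro ⟨h1, h2⟩
    refine ⟨⟨fun i => ?_, fun i j hi hj => ?_⟩, ?_, ?_⟩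
    · have := h1 (Fin.castSucc i); simpa using this
    · have := h2 (Fin.castSucc i) (Fin.castSucc j) (by simpa using hi) (by simpa using hj)
      simpa using this
    · have := (h1 (Fin.last (m+1))).1; simpa using this
    · have := h2 (Fin.castSucc (Fin.last m)) (Fin.last (m+1))
        (by simp; omega) (by simp)
      simpa using this
  · rintro ⟨⟨h1, h2⟩, hx0, hxt⟩
    refine ⟨fun i => ?_, fun i j hi hj => ?_⟩
    · induction i using Fin.lastCases with
      | last =>
        have hlt : t (Fin.last m) < 1 := (h1 (Fin.last m)).2
        simp only [Fin.snoc_last]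
        exact ⟨hx0, lt_trans hxt hlt⟩
      | cast i => simpa using h1 i
    · induction j using Fin.lastCases with
      | last =>
        induction i using Fin.lastCases with
        | last =>
          exfalso
          simp only [Fin.val_last] at hj
          omega
        | cast i =>
          have hi' : i = Fin.last m := by
            apply Fin.ext
            have := i.isLt
            simp only [Fin.val_last, Fin.coe_castSucc] at hj ⊢
            omega
          subst hi'
          simpa using hxt
      | cast j =>
        induction i using Fin.lastCases with
        | last =>
          exfalso
          have hlt : (j : ℕ) < m + 1 := j.isLt
          simp only [Fin.coe_castSucc, Fin.val_last] at hj
          omega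
        | cast i =>
          have := h2 i j (by simpa using hi) (by simpa using hj)
          simpa using this


lemma lintegral_exp_Ioo (c d p q : ℝ) (hc : c ≠ 0) (hpq : p ≤ q) :
    ∫⁻ x in Ioo p q, ENNReal.ofReal (Real.exp (c * x + d)) =
      ENNReal.ofReal ((Real.exp (c * q + d) - Real.exp (c * p + d)) / c) := by
  have hcont : Continuous fun x : ℝ => Real.exp (c * x + d) := by continuity
  have hint : IntegrableOn (fun x : ℝ => Real.exp (c * x + d)) (Ioo p q) :=
    (hcont.integrableOn_Icc).mono_set Ioo_subset_Icc_self
  rw [← ofReal_integral_eq_lintegral_ofReal hint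
    (ae_of_all _ fun x => (Real.exp_pos _).le)]
  congr 1
  have hderiv : ∀ x ∈ uIcc p q, HasDerivAt (fun y => Real.exp (c * y + d) / c)
      (Real.exp (c * x + d)) x := by
    intro x _
    have h1 : HasDerivAt (fun y : ℝ => c * y + d) c x := by
      simpa using ((hasDerivAt_id x).const_mul c).add_const d
    have h2 := h1.exp.div_const c
    rw [mul_div_cancel_right₀ _ hc] at h2
    exact h2
  have h3 := intervalIntegral.integral_eq_sub_of_hasDerivAt hderiv
    (hcont.intervalIntegrable p q)
  rw [← integral_Ioc_eq_integral_Ioo, ← intervalIntegral.integral_of_le hpq, h3]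
  ring

lemma lintegral_exp_Ioo_le (c d q : ℝ) (hc : 0 < c) :
    ∫⁻ x in Ioo 0 q, ENNReal.ofReal (Real.exp (c * x + d)) ≤
      ENNReal.ofReal (Real.exp (c * q + d) / c) := by
  rcases le_or_gt q 0 with h | h
  · rw [Ioo_eq_empty (not_lt.2 h)]
    simp
  · rw [lintegral_exp_Ioo c d 0 q hc.ne' h.le]
    apply ENNReal.ofReal_le_ofReal
    gcongr
    linarith [Real.exp_pos (c * 0 + d)]

lemma lintegral_exp_neg_Ioo01 (c : ℝ) (hc : 0 < c) :
    ∫⁻ x in Ioo (0:ℝ) 1, ENNReal.ofReal (Real.exp (-c * x)) ≤ ENNReal.ofReal (1 / c) := by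
  calc ∫⁻ x in Ioo (0:ℝ) 1, ENNReal.ofReal (Real.exp (-c * x))
      = ∫⁻ x in Ioo (0:ℝ) 1, ENNReal.ofReal (Real.exp (-c * x + 0)) := by simp
    _ = ENNReal.ofReal ((Real.exp (-c * 1 + 0) - Real.exp (-c * 0 + 0)) / (-c)) :=
        lintegral_exp_Ioo (-c) 0 0 1 (neg_ne_zero.2 hc.ne') zero_le_one
    _ ≤ ENNReal.ofReal (1 / c) := by
        apply ENNReal.ofReal_le_ofReal
        have h1 : Real.exp (-c * 0 + 0) = 1 := by norm_num
        have h2 : 0 < Real.exp (-c * 1 + 0) := Real.exp_pos _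
        rw [h1, div_neg, ← neg_div, neg_sub]
        gcongr
        linarith

lemma peel (n : ℕ) (f : (Fin (n+1) → ℝ) → ℝ≥0∞) (hf : Measurable f) :
    ∫⁻ t : Fin (n+1) → ℝ, f t = ∫⁻ t : Fin n → ℝ, ∫⁻ x : ℝ, f (Fin.snoc t x) := by
  set e := MeasurableEquiv.piFinSuccAbove (fun _ : Fin (n+1) => ℝ) (Fin.last n) with he
  have mp := (volume_preserving_piFinSuccAbove (fun _ : Fin (n+1) => ℝ) (Fin.last n)).symm
  rw [← mp.map_eq, lintegral_map hf (MeasurableEquiv.measurable _), Measure.volume_eq_prod,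
    lintegral_prod_symm (fun a => f (e.symm a))
      ((hf.comp e.symm.measurable).aemeasurable)]
  have hs : ∀ (t : Fin n → ℝ) (x : ℝ), e.symm (x, t) = Fin.snoc t x := by
    intro t x
    show (MeasurableEquiv.piFinSuccAbove (fun _ : Fin (n+1) => ℝ) (Fin.last n)).symm (x, t)
      = Fin.snoc t x
    simp only [MeasurableEquiv.piFinSuccAbove, Fin.insertNthEquiv, Fin.insertNth_last', Fin.removeNth_last, MeasurableEquiv.symm_mk, Equiv.symm_symm, MeasurableEquiv.coe_mk, Equiv.coe_fn_mk]
  simp only [hs]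


lemma sum_snoc (m : ℕ) (t : Fin m → ℝ) (x : ℝ) :
    ∑ i : Fin (m+1), (-1:ℝ)^(i:ℕ) * (Fin.snoc t x : Fin (m+1) → ℝ) i
      = (∑ i : Fin m, (-1:ℝ)^(i:ℕ) * t i) + (-1:ℝ)^m * x := by
  rw [Fin.sum_univ_castSucc]
  simp

lemma F_snoc_odd {m : ℕ} (hm : m % 2 = 0) (c : ℝ) (t : Fin m → ℝ) (x : ℝ) :
    F c (m+1) (Fin.snoc t x) =
      F c m t * (Ioo (0:ℝ) 1).indicator (fun y => ENNReal.ofReal (Real.exp (-c * y))) x := by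
  have hpow : (-1:ℝ)^m = 1 := (Nat.even_iff.2 hm).neg_one_pow
  by_cases ht : t ∈ pSet m
  · by_cases hx : x ∈ Ioo (0:ℝ) 1
    · have hmem : Fin.snoc t x ∈ pSet (m+1) := (pSet_snoc hm t x).2 ⟨ht, hx.1, hx.2⟩
      rw [F, F, indicator_of_mem hmem, indicator_of_mem ht, indicator_of_mem hx, pexp, pexp,
        ← ENNReal.ofReal_mul (Real.exp_nonneg _)]
      congr 1
      rw [← Real.exp_add]
      congr 1
      rw [sum_snoc, hpow]
      ring
    · have hns : Fin.snoc t x ∉ pSet (m+1) := fun h =>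
        hx ⟨((pSet_snoc hm t x).1 h).2.1, ((pSet_snoc hm t x).1 h).2.2⟩
      rw [F, F, indicator_of_notMem hns, indicator_of_notMem hx, mul_zero]
  · have hns : Fin.snoc t x ∉ pSet (m+1) := fun h => ht ((pSet_snoc hm t x).1 h).1
    rw [F, F, indicator_of_notMem hns, indicator_of_notMem ht, zero_mul]

noncomputable def Aux (c : ℝ) (m : ℕ) : (Fin (m+1) → ℝ) → ℝ≥0∞ :=
  (pSet (m+1)).indicator fun t =>
    ENNReal.ofReal (Real.exp (-c * ∑ i : Fin m, (-1:ℝ)^(i:ℕ) * t (Fin.castSucc i)) / c)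

lemma measurable_Aux (c : ℝ) (m : ℕ) : Measurable (Aux c m) := by
  apply Measurable.indicator _ (measurableSet_pSet _)
  apply Measurable.ennreal_ofReal
  apply Measurable.div_const
  apply Real.measurable_exp.comp
  apply Measurable.const_mul
  exact Finset.measurable_sum _ fun i _ => (measurable_pi_apply _).const_mul _

lemma inner_le_Aux {m : ℕ} (hm : m % 2 = 0) {c : ℝ} (hc : 0 < c) (t : Fin (m+1) → ℝ) :
    (∫⁻ x : ℝ, F c (m+2) (Fin.snoc t x)) ≤ Aux c m t := by
  by_cases ht : t ∈ pSet (m+1)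
  · have hrep : ∀ x : ℝ, F c (m+2) (Fin.snoc t x)
        = (Ioo (0:ℝ) (t (Fin.last m))).indicator
            (fun x => ENNReal.ofReal (Real.exp
              (c * x + (-c * ∑ i : Fin (m+1), (-1:ℝ)^(i:ℕ) * t i)))) x := by
      intro x
      by_cases hx : x ∈ Ioo (0:ℝ) (t (Fin.last m))
      · have hmem : Fin.snoc t x ∈ pSet (m+2) := (pSet_snoc_pair hm t x).2 ⟨ht, hx.1, hx.2⟩
        rw [F, indicator_of_mem hmem, indicator_of_mem hx, pexp]
        congr 1
        congr 1
        rw [sum_snoc]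
        have hpow : (-1:ℝ)^(m+1) = -1 := (Nat.odd_iff.2 (by omega)).neg_one_pow
        rw [hpow]
        ring
      · have hns : Fin.snoc t x ∉ pSet (m+2) := fun h =>
          hx ⟨((pSet_snoc_pair hm t x).1 h).2.1, ((pSet_snoc_pair hm t x).1 h).2.2⟩
        rw [F, indicator_of_notMem hns, indicator_of_notMem hx]
    simp_rw [hrep]
    rw [lintegral_indicator measurableSet_Ioo]
    refine (lintegral_exp_Ioo_le c _ _ hc).trans ?_
    rw [Aux, indicator_of_mem ht]
    apply le_of_eq
    congr 1
    congr 2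
    rw [Fin.sum_univ_castSucc]
    have hpow : (-1:ℝ)^m = 1 := (Nat.even_iff.2 hm).neg_one_pow
    simp only [Fin.coe_castSucc, Fin.val_last, hpow]
    ring
  · have h0 : ∀ x : ℝ, F c (m+2) (Fin.snoc t x) = 0 := by
      intro x
      have hns : Fin.snoc t x ∉ pSet (m+2) := fun h => ht ((pSet_snoc_pair hm t x).1 h).1
      rw [F, indicator_of_notMem hns]
    simp_rw [h0]
    simp [Aux, indicator_of_notMem ht]

lemma Aux_snoc {m : ℕ} (hm : m % 2 = 0) {c : ℝ} (hc : 0 < c) (s : Fin m → ℝ) (y : ℝ) :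
    Aux c m (Fin.snoc s y)
      = (ENNReal.ofReal (1/c) * F c m s) * (Ioo (0:ℝ) 1).indicator (fun _ => 1) y := by
  by_cases hs : s ∈ pSet m
  · by_cases hy : y ∈ Ioo (0:ℝ) 1
    · have hmem : Fin.snoc s y ∈ pSet (m+1) := (pSet_snoc hm s y).2 ⟨hs, hy.1, hy.2⟩
      rw [Aux, indicator_of_mem hmem, F, indicator_of_mem hs, indicator_of_mem hy, pexp, mul_one]
      simp only [Fin.snoc_castSucc]
      have hval : Real.exp (-c * ∑ i : Fin m, (-1:ℝ)^(i:ℕ) * s i) / c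
          = (1/c) * Real.exp (-c * ∑ i : Fin m, (-1:ℝ)^(i:ℕ) * s i) := by ring
      rw [hval, ENNReal.ofReal_mul (by positivity)]
    · have hns : Fin.snoc s y ∉ pSet (m+1) := fun h =>
        hy ⟨((pSet_snoc hm s y).1 h).2.1, ((pSet_snoc hm s y).1 h).2.2⟩
      rw [Aux, indicator_of_notMem hns, indicator_of_notMem hy, mul_zero]
  · have hns : Fin.snoc s y ∉ pSet (m+1) := fun h => hs ((pSet_snoc hm s y).1 h).1
    rw [Aux, indicator_of_notMem hns, F, indicator_of_notMem hs, mul_zero, zero_mul]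


lemma key (c : ℝ) (hc : 0 < c) (n : ℕ) :
    ∫⁻ t : Fin n → ℝ, F c n t ≤ ENNReal.ofReal (1 / c) ^ ((n + 1) / 2) := by
  induction n using Nat.strong_induction_on with
  | _ n ih => ?_
  have h3 : n = 0 ∨ (∃ m, m % 2 = 0 ∧ n = m + 1) ∨ ∃ m, m % 2 = 0 ∧ n = m + 2 := by
    rcases Nat.even_or_odd n with h | h
    · rw [Nat.even_iff] at h
      rcases Nat.eq_zero_or_pos n with h0 | h0
      · exact Or.inl h0
      · exact Or.inr (Or.inr ⟨n - 2, by omega, by omega⟩)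
    · rw [Nat.odd_iff] at h
      exact Or.inr (Or.inl ⟨n - 1, by omega, by omega⟩)
  rcases h3 with rfl | ⟨m, hm, rfl⟩ | ⟨m, hm, rfl⟩
  · -- n = 0
    have hF : F c 0 = fun _ => 1 := by
      funext t
      have ht : t ∈ pSet 0 := ⟨fun i => i.elim0, fun i => i.elim0⟩
      simp [F, indicator_of_mem ht, pexp]
    rw [hF]
    rw [lintegral_one]
    rw [show (volume : Measure (Fin 0 → ℝ)) = Measure.pi (fun _ => volume) from rfl,
      Measure.pi_of_empty]
    simp
  · -- n = m + 1, m even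
    have ihm := ih m (by omega)
    have hK : ∫⁻ x : ℝ, (Ioo (0:ℝ) 1).indicator
        (fun y => ENNReal.ofReal (Real.exp (-c * y))) x ≤ ENNReal.ofReal (1/c) := by
      rw [lintegral_indicator measurableSet_Ioo]
      exact lintegral_exp_neg_Ioo01 c hc
    calc ∫⁻ t : Fin (m+1) → ℝ, F c (m+1) t
        = ∫⁻ t : Fin m → ℝ, ∫⁻ x : ℝ, F c (m+1) (Fin.snoc t x) :=
          peel m _ (measurable_F c (m+1))
      _ = ∫⁻ t : Fin m → ℝ, F c m t * ∫⁻ x : ℝ, (Ioo (0:ℝ) 1).indicator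
            (fun y => ENNReal.ofReal (Real.exp (-c * y))) x := by
          apply lintegral_congr
          intro t
          simp_rw [F_snoc_odd hm c t]
          rw [lintegral_const_mul' _ _ (F_ne_top c m t)]
      _ ≤ ∫⁻ t : Fin m → ℝ, F c m t * ENNReal.ofReal (1/c) :=
          lintegral_mono fun t => mul_le_mul_right hK _
      _ = (∫⁻ t : Fin m → ℝ, F c m t) * ENNReal.ofReal (1/c) :=
          lintegral_mul_const' _ _ ENNReal.ofReal_ne_top
      _ ≤ ENNReal.ofReal (1/c) ^ ((m+1)/2) * ENNReal.ofReal (1/c) :=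
          mul_le_mul_left ihm _
      _ = ENNReal.ofReal (1/c) ^ ((m+1+1)/2) := by
          rw [← pow_succ]
          congr 1
          omega
  · -- n = m + 2, m even
    have ihm := ih m (by omega)
    calc ∫⁻ t : Fin (m+2) → ℝ, F c (m+2) t
        = ∫⁻ t : Fin (m+1) → ℝ, ∫⁻ x : ℝ, F c (m+2) (Fin.snoc t x) :=
          peel _ _ (measurable_F c (m+2))
      _ ≤ ∫⁻ t : Fin (m+1) → ℝ, Aux c m t := lintegral_mono (inner_le_Aux hm hc)
      _ = ∫⁻ s : Fin m → ℝ, ∫⁻ y : ℝ, Aux c m (Fin.snoc s y) :=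
          peel _ _ (measurable_Aux c m)
      _ = ∫⁻ s : Fin m → ℝ, ENNReal.ofReal (1/c) * F c m s := by
          apply lintegral_congr
          intro s
          simp_rw [Aux_snoc hm hc s]
          rw [lintegral_const_mul' _ _
            (ENNReal.mul_ne_top ENNReal.ofReal_ne_top (F_ne_top c m s))]
          rw [lintegral_indicator measurableSet_Ioo]
          simp [Real.volume_Ioo]
      _ = ENNReal.ofReal (1/c) * ∫⁻ s : Fin m → ℝ, F c m s :=
          lintegral_const_mul' _ _ ENNReal.ofReal_ne_top
      _ ≤ ENNReal.ofReal (1/c) * ENNReal.ofReal (1/c) ^ ((m+1)/2) :=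
          mul_le_mul_right ihm _
      _ = ENNReal.ofReal (1/c) ^ ((m+2+1)/2) := by
          rw [← pow_succ']
          congr 1
          omega

end Stmt19Aux

/-- With `Gₙ` the open simplex `0 < tₙ < ⋯ < t₁ < 1` and
`uₙ(t) = t₁ - t₂ + ⋯ + (-1)^{n+1} tₙ`, for every `ν > 0` the integral
`fₙ⁻ = ∫_{Gₙ} e^{-4ν uₙ(t)} dt` satisfies `fₙ⁻ ≤ (4ν)^{-n/2}` for even `n ≥ 4`
and `fₙ⁻ ≤ (4ν)^{-(n+1)/2}` for odd `n ≥ 3`. -/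
theorem stmt19 (n : ℕ) (hn1 : 1 ≤ n) (ν : ℝ) (hν : 0 < ν)
    (G : Set (Fin n → ℝ))
    (hG : G = {t : Fin n → ℝ | (∀ i, 0 < t i ∧ t i < 1) ∧
      ∀ i j : Fin n, i < j → t j < t i})
    (u : (Fin n → ℝ) → ℝ)
    (hu : u = fun t => ∑ i : Fin n, (-1 : ℝ) ^ (i : ℕ) * t i) :
    (4 ≤ n → Even n →
      ∫ t in G, Real.exp (-(4 * ν) * u t) ≤ (4 * ν) ^ (-(n : ℝ) / 2)) ∧
    (3 ≤ n → Odd n →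
      ∫ t in G, Real.exp (-(4 * ν) * u t) ≤ (4 * ν) ^ (-((n : ℝ) + 1) / 2)) := by
  open Stmt19Aux in
  have hc : (0:ℝ) < 4 * ν := by linarith
  subst hu
  have hGsub : G ⊆ Stmt19Aux.pSet n := by
    rw [hG]
    rintro t ⟨h1, h2⟩
    refine ⟨h1, fun i j hi hj => ?_⟩
    exact h2 i j (by rw [Fin.lt_def]; omega)
  have hmeas : Measurable fun t : Fin n → ℝ =>
      Real.exp (-(4*ν) * ∑ i : Fin n, (-1:ℝ)^(i:ℕ) * t i) :=
    Real.measurable_exp.comp ((Stmt19Aux.measurable_sum_aux n).const_mul _)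
  have main : ∫ t in G, Real.exp (-(4*ν) * ∑ i : Fin n, (-1:ℝ)^(i:ℕ) * t i)
      ≤ (1/(4*ν)) ^ ((n+1)/2) := by
    rw [MeasureTheory.integral_eq_lintegral_of_nonneg_ae
      (Filter.Eventually.of_forall fun t => (Real.exp_pos _).le)
      hmeas.aestronglyMeasurable.restrict]
    apply ENNReal.toReal_le_of_le_ofReal (by positivity)
    calc ∫⁻ t in G, ENNReal.ofReal
          (Real.exp (-(4*ν) * ∑ i : Fin n, (-1:ℝ)^(i:ℕ) * t i))
        ≤ ∫⁻ t in Stmt19Aux.pSet n, ENNReal.ofReal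
            (Real.exp (-(4*ν) * ∑ i : Fin n, (-1:ℝ)^(i:ℕ) * t i)) :=
          MeasureTheory.lintegral_mono_set hGsub
      _ = ∫⁻ t, Stmt19Aux.F (4*ν) n t := by
          have hFe : Stmt19Aux.F (4*ν) n = (Stmt19Aux.pSet n).indicator
              (fun t => ENNReal.ofReal
                (Real.exp (-(4*ν) * ∑ i : Fin n, (-1:ℝ)^(i:ℕ) * t i))) := rfl
          rw [hFe, MeasureTheory.lintegral_indicator (Stmt19Aux.measurableSet_pSet n)]
      _ ≤ ENNReal.ofReal (1/(4*ν)) ^ ((n+1)/2) := Stmt19Aux.key _ hc n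
      _ = ENNReal.ofReal ((1/(4*ν)) ^ ((n+1)/2)) :=
          (ENNReal.ofReal_pow (by positivity) _).symm
  constructor
  · intro _ heven
    refine main.trans (le_of_eq ?_)
    obtain ⟨k, hk⟩ := heven
    subst hk
    have h1 : (k + k + 1) / 2 = k := by omega
    rw [h1, one_div, inv_pow, ← Real.rpow_natCast (4*ν) k, ← Real.rpow_neg hc.le]
    congr 1
    push_cast
    ring
  · intro _ hodd
    refine main.trans (le_of_eq ?_)
    obtain ⟨k, hk⟩ := hodd
    subst hk
    have h1 : (2 * k + 1 + 1) / 2 = k + 1 := by omega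
    rw [h1, one_div, inv_pow, ← Real.rpow_natCast (4*ν) (k+1), ← Real.rpow_neg hc.le]
    congr 1
    push_cast
    ring
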